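/- Let q be a probability distribution on [n] and τ > 0. Iteratively applying Right-Interval(q, ·, τ) to peel off intervals from the right of [n] until [n] is exhausted produces a partition of [n] into at most ⌈2/τ⌉ + 1 intervals. -/

import Mathlib

/-- Specification of the subroutine Right-Interval(q, [a,b], τ): it returns [i', b]
where i' = b if q(b) > τ, and otherwise i' is the least a ≤ i ≤ b with q([i,b]) ≤ τ. -/
def RIspec (q : ℕ → ℝ) (a b : ℕ) (τ : ℝ) (i' : ℕ) : Prop :=
  (τ < q b ∧ i' = b) ∨
  (q b ≤ τ ∧ a ≤ i' ∧ i' ≤ b ∧ (∑ j ∈ Finset.Icc i' b, q j) ≤ τ ∧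
    ∀ i, a ≤ i → i < i' → τ < ∑ j ∈ Finset.Icc i b, q j)

private lemma sum_pair_range (M : ℕ → ℝ) (p : ℕ) :
    ∑ j ∈ Finset.range (2 * p), M j = ∑ k ∈ Finset.range p, (M (2 * k) + M (2 * k + 1)) := by
  induction p with
  | zero => simp
  | succ p ih =>
      rw [Nat.mul_succ, Finset.sum_range_succ, Finset.sum_range_succ, Finset.sum_range_succ, ih]
      ring

/-- iteratively peeling intervals off the right of [n] with
Right-Interval(q, ·, τ) yields a partition of [n] into at most ⌈2/τ⌉ + 1 intervals.
Here c j is the right endpoint remaining after j iterations (c 0 = n, c m = 0), and the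
j-th removed interval is [c (j+1) + 1, c j]. -/
theorem right_interval_decomposition_size (n m : ℕ) (q : ℕ → ℝ) (τ : ℝ) (c : ℕ → ℕ)
    (hn : 1 ≤ n) (hτ : 0 < τ)
    (hq0 : ∀ i, 0 ≤ q i)
    (hq1 : ∑ i ∈ Finset.Icc 1 n, q i = 1)
    (hc0 : c 0 = n) (hcm : c m = 0)
    (hdec : ∀ j, j < m → c (j + 1) < c j)
    (hstep : ∀ j, j < m → RIspec q 1 (c j) τ (c (j + 1) + 1)) :
    m ≤ ⌈2 / τ⌉₊ + 1 := by
  -- the mass of the j-th removed interval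
  set M : ℕ → ℝ := fun j => ∑ i ∈ Finset.Ioc (c (j + 1)) (c j), q i with hM
  have hMnonneg : ∀ j, 0 ≤ M j := fun j => Finset.sum_nonneg fun i _ => hq0 i
  -- strict monotonicity: c j < c k for k < j ≤ m
  have hmono : ∀ j, j ≤ m → ∀ k, k < j → c j < c k := by
    intro j hj
    induction j with
    | zero => intro k hk; omega
    | succ j ih =>
        intro k hk
        have h1 : c (j + 1) < c j := hdec j (by omega)
        rcases Nat.lt_succ_iff_lt_or_eq.mp hk with hk' | hk'
        · exact h1.trans (ih (by omega) k hk')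
        · subst hk'; exact h1
  have hpos : ∀ k, k < m → 0 < c k := by
    intro k hk
    have := hmono m le_rfl k hk
    omega
  have hle_n : ∀ j, j ≤ m → c j ≤ n := by
    intro j hj
    rcases Nat.eq_zero_or_pos j with h | h
    · subst h; omega
    · have := hmono j hj 0 h; omega
  -- consecutive intervals have combined mass > τ
  have hpair : ∀ j, j + 1 < m → τ < M j + M (j + 1) := by
    intro j hj
    have hjm : j < m := by omega
    rcases hstep j hjm with ⟨hq, heq⟩ | ⟨_, _, _, _, hmin⟩
    · -- q (c j) > τ, and c j is in interval j
      have hmem : c j ∈ Finset.Ioc (c (j + 1)) (c j) :=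
        Finset.mem_Ioc.mpr ⟨hdec j hjm, le_rfl⟩
      have h1 : q (c j) ≤ M j :=
        Finset.single_le_sum (f := q) (fun i _ => hq0 i) hmem
      have := hMnonneg (j + 1)
      linarith
    · -- minimality at i = c (j+1)
      have hc1 : 1 ≤ c (j + 1) := hpos (j + 1) hj
      have h2 : τ < ∑ i ∈ Finset.Icc (c (j + 1)) (c j), q i :=
        hmin (c (j + 1)) hc1 (by omega)
      have hsplit : ∑ i ∈ Finset.Icc (c (j + 1)) (c j), q i = q (c (j + 1)) + M j := by
        rw [Finset.Icc_eq_cons_Ioc (le_of_lt (hdec j hjm)), Finset.sum_cons]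
      -- q (c (j+1)) is part of interval j+1
      have hmem : c (j + 1) ∈ Finset.Ioc (c (j + 2)) (c (j + 1)) :=
        Finset.mem_Ioc.mpr ⟨hdec (j + 1) hj, le_rfl⟩
      have h3 : q (c (j + 1)) ≤ M (j + 1) :=
        Finset.single_le_sum (f := q) (fun i _ => hq0 i) hmem
      rw [hsplit] at h2
      linarith
  -- telescoping: partial sums of M
  have htel : ∀ t, t ≤ m → ∑ j ∈ Finset.range t, M j = ∑ i ∈ Finset.Ioc (c t) n, q i := by
    intro t ht
    induction t with
    | zero => simp [hc0]
    | succ t ih =>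
        rw [Finset.sum_range_succ, ih (by omega)]
        have h1 : c (t + 1) ≤ c t := le_of_lt (hdec t (by omega))
        have h2 : c t ≤ n := hle_n t (by omega)
        simp only [hM]
        rw [← Finset.sum_Ioc_consecutive q h1 h2, add_comm]
  have htotal : ∑ j ∈ Finset.range m, M j = 1 := by
    rw [htel m le_rfl, hcm, ← hq1, ← Finset.Icc_add_one_left_eq_Ioc, zero_add]
  -- pair up intervals
  set p := m / 2 with hp
  rcases Nat.eq_zero_or_pos p with hp0 | hp1
  · have : m ≤ 1 := by omega
    omega
  · have hsum : (p : ℝ) * τ < ∑ k ∈ Finset.range p, (M (2 * k) + M (2 * k + 1)) := by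
      have : ∑ k ∈ Finset.range p, τ < ∑ k ∈ Finset.range p, (M (2 * k) + M (2 * k + 1)) := by
        apply Finset.sum_lt_sum_of_nonempty
        · exact Finset.nonempty_range_iff.mpr (by omega)
        · intro k hk
          exact hpair (2 * k) (by have := Finset.mem_range.mp hk; omega)
      simpa [mul_comm] using this
    have hle1 : ∑ k ∈ Finset.range p, (M (2 * k) + M (2 * k + 1)) ≤ 1 := by
      rw [← sum_pair_range M p, ← htotal]
      apply Finset.sum_le_sum_of_subset_of_nonneg
      · exact Finset.range_subset_range.mpr (by omega)
      · intro i _ _; exact hMnonneg i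
    have hpτ : (p : ℝ) * τ < 1 := lt_of_lt_of_le hsum hle1
    have h2p : (2 * p : ℝ) < 2 / τ := by
      rw [lt_div_iff₀ hτ]
      nlinarith
    have hceil : (2 / τ : ℝ) ≤ (⌈2 / τ⌉₊ : ℝ) := Nat.le_ceil _
    have : (2 * p : ℕ) < ⌈2 / τ⌉₊ := by
      have : ((2 * p : ℕ) : ℝ) < (⌈2 / τ⌉₊ : ℝ) := by push_cast; linarith
      exact_mod_cast this
    omega
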